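/- (Realignment criterion) Let N_A, N_B ≥ 2 and let ρ be a separable bipartite density matrix on (Fin N_A × Fin N_B), i.e. ρ = Σ_{i∈s} p_i (ρ_i^A ⊗ₖ ρ_i^B) for a finite index set s, reals p_i > 0 with Σ_{i∈s} p_i = 1, and density matrices ρ_i^A of size N_A×N_A and ρ_i^B of size N_B×N_B. Then the realigned matrix satisfies ‖RM(ρ)‖_tr ≤ 1. -/

import Mathlib

open Matrix Kronecker Complex ComplexOrder

noncomputable def traceNorm {m n : Type*} [Fintype m] [Fintype n] [DecidableEq n]
    (M : Matrix m n ℂ) : ℝ :=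
  ((Matrix.posSemidef_conjTranspose_mul_self M).1.eigenvectorUnitary.1 *
    diagonal (fun i => ((Real.sqrt ((Matrix.posSemidef_conjTranspose_mul_self M).1.eigenvalues i) : ℝ) : ℂ)) *
    (star (Matrix.posSemidef_conjTranspose_mul_self M).1.eigenvectorUnitary : Matrix n n ℂ)).trace.re

def realign {NA NB : ℕ} (ρ : Matrix (Fin NA × Fin NB) (Fin NA × Fin NB) ℂ) :
    Matrix (Fin NA × Fin NA) (Fin NB × Fin NB) ℂ :=
  fun p q => ρ (p.1, q.1) (p.2, q.2)

def IsDensityMatrix {n : Type*} [Fintype n] (ρ : Matrix n n ℂ) : Prop :=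
  ρ.PosSemidef ∧ ρ.trace = 1

noncomputable def hsNorm {m n : Type*} [Fintype m] [Fintype n] (M : Matrix m n ℂ) : ℝ :=
  Real.sqrt (∑ i, ∑ j, ‖M i j‖ ^ 2)

noncomputable def hsInner {m n : Type*} [Fintype m] [Fintype n] (X Y : Matrix m n ℂ) : ℂ :=
  (Xᴴ * Y).trace

noncomputable def marginalA {NA NB : ℕ} (ρ : Matrix (Fin NA × Fin NB) (Fin NA × Fin NB) ℂ) :
    Matrix (Fin NA) (Fin NA) ℂ :=
  fun m n => ∑ μ, ρ (m, μ) (n, μ)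

noncomputable def marginalB {NA NB : ℕ} (ρ : Matrix (Fin NA × Fin NB) (Fin NA × Fin NB) ℂ) :
    Matrix (Fin NB) (Fin NB) ℂ :=
  fun μ ν => ∑ m, ρ (m, μ) (m, ν)

def SeparableState {NA NB : ℕ} (ρ : Matrix (Fin NA × Fin NB) (Fin NA × Fin NB) ℂ) : Prop :=
  ∃ (ι : Type) (s : Finset ι) (p : ι → ℝ)
    (ρA : ι → Matrix (Fin NA) (Fin NA) ℂ) (ρB : ι → Matrix (Fin NB) (Fin NB) ℂ),
    (∀ i ∈ s, 0 < p i) ∧ (∑ i ∈ s, p i = 1) ∧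
    (∀ i ∈ s, IsDensityMatrix (ρA i)) ∧ (∀ i ∈ s, IsDensityMatrix (ρB i)) ∧
    ρ = ∑ i ∈ s, (p i : ℂ) • (ρA i ⊗ₖ ρB i)

noncomputable def l2OpNorm {n : Type*} [Fintype n] [DecidableEq n] (M : Matrix n n ℂ) : ℝ :=
  ‖Matrix.toEuclideanCLM (𝕜 := ℂ) (n := n) M‖

section RealignAux

set_option linter.unusedSectionVars false
set_option maxHeartbeats 1000000

variable {m n : Type*} [Fintype m] [Fintype n] [DecidableEq m] [DecidableEq n]

private lemma re_star_dot (v : m → ℂ) : (star v ⬝ᵥ v).re = ∑ i, ‖v i‖ ^ 2 := by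
  simp [dotProduct, Complex.re_sum, Pi.star_apply, ← Complex.normSq_eq_norm_sq,
    Complex.normSq_eq_conj_mul_self, Complex.normSq_apply]

private lemma retrace_conjTranspose_mul_self (A : Matrix m n ℂ) :
    ((Aᴴ * A).trace).re = ∑ i, ∑ j, ‖A i j‖ ^ 2 := by
  simp only [Matrix.trace, Matrix.diag, Matrix.mul_apply, conjTranspose_apply,
    Complex.re_sum]
  rw [Finset.sum_comm]
  refine Finset.sum_congr rfl fun i _ => Finset.sum_congr rfl fun j _ => ?_
  simp [← Complex.normSq_eq_norm_sq, Complex.normSq_eq_conj_mul_self,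
    Complex.normSq_apply]

private lemma density_sum_sq_le {A : Matrix n n ℂ} (hA : IsDensityMatrix A) :
    ∑ i, ∑ j, ‖A i j‖ ^ 2 ≤ 1 := by
  obtain ⟨hPSD, htr⟩ := hA
  have hH : A.IsHermitian := hPSD.1
  set U : Matrix n n ℂ := (hH.eigenvectorUnitary : Matrix n n ℂ) with hU
  set f : n → ℂ := (↑) ∘ hH.eigenvalues with hf
  have hUU : star U * U = 1 := UnitaryGroup.star_mul_self hH.eigenvectorUnitary
  have hspec : A = U * diagonal f * star U := hH.spectral_theorem
  have htrdiag : A.trace = ∑ j, f j := by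
    rw [hspec, Matrix.trace_mul_cycle, hUU, Matrix.one_mul, Matrix.trace_diagonal]
  have hsum1 : ∑ j, hH.eigenvalues j = 1 := by
    have h1 : ((∑ j, hH.eigenvalues j : ℝ) : ℂ) = ∑ j, f j := by push_cast; rfl
    exact_mod_cast (h1.trans htrdiag.symm).trans htr
  have hAA : (Aᴴ * A).trace = ∑ j, f j * f j := by
    rw [show Aᴴ = A from hH]
    conv_lhs => rw [hspec]
    rw [show U * diagonal f * star U * (U * diagonal f * star U)
        = U * (diagonal f * (star U * U) * diagonal f) * star U by
      simp only [Matrix.mul_assoc]]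
    rw [hUU, Matrix.mul_one, Matrix.trace_mul_cycle, hUU,
      Matrix.one_mul, diagonal_mul_diagonal, Matrix.trace_diagonal]
  have hre : ((Aᴴ * A).trace).re = ∑ j, hH.eigenvalues j ^ 2 := by
    rw [hAA]
    simp [hf, Complex.re_sum, ← Complex.ofReal_mul, sq]
  rw [← retrace_conjTranspose_mul_self, hre]
  calc ∑ j, hH.eigenvalues j ^ 2 ≤ ∑ j, hH.eigenvalues j * 1 := by
        refine Finset.sum_le_sum fun j _ => ?_
        rw [sq]
        refine mul_le_mul_of_nonneg_left ?_ (hPSD.eigenvalues_nonneg j)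
        rw [← hsum1]
        exact Finset.single_le_sum (fun i _ => hPSD.eigenvalues_nonneg i) (Finset.mem_univ j)
   _ = 1 := by simp [hsum1]

private lemma trace_unitary_conj (u : Matrix.unitaryGroup n ℂ) (d : n → ℂ) :
    ((u : Matrix n n ℂ) * diagonal d * (star u : Matrix n n ℂ)).trace = ∑ j, d j := by
  rw [Matrix.trace_mul_cycle]
  have h : (star u : Matrix n n ℂ) * (u : Matrix n n ℂ) = 1 :=
    UnitaryGroup.star_mul_self u
  rw [show ((star u : Matrix n n ℂ) * (u : Matrix n n ℂ) * diagonal d).trace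
      = ((1 : Matrix n n ℂ) * diagonal d).trace by rw [h]]
  rw [Matrix.one_mul, Matrix.trace_diagonal]

private lemma exists_dual (M : Matrix m n ℂ) :
    ∃ V : Matrix m n ℂ,
      traceNorm M = ((Vᴴ * M).trace).re ∧
      ∀ c : n → ℂ, (star (V *ᵥ c) ⬝ᵥ (V *ᵥ c)).re ≤ (star c ⬝ᵥ c).re := by
  have hH : (Mᴴ * M).PosSemidef := Matrix.posSemidef_conjTranspose_mul_self M
  set lam : n → ℝ := hH.1.eigenvalues with hlam
  set U : Matrix n n ℂ := (hH.1.eigenvectorUnitary : Matrix n n ℂ) with hU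
  have hUU : star U * U = 1 := UnitaryGroup.star_mul_self hH.1.eigenvectorUnitary
  have hUU' : U * star U = 1 := mul_eq_one_comm.mp hUU
  set f : n → ℂ := (↑) ∘ lam with hf
  have hdiag : star U * (Mᴴ * M) * U = diagonal f := by
    have h := hH.1.conjStarAlgAut_star_eigenvectorUnitary
    rw [Unitary.conjStarAlgAut_apply, Unitary.coe_star, star_star] at h
    exact h
  set g : n → ℂ := fun j => ((Real.sqrt (lam j))⁻¹ : ℝ) with hg
  set V : Matrix m n ℂ := M * U * diagonal g * star U with hV
  have hgg : star g = g := by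
    funext j
    simp [hg, ← Complex.ofReal_inv, Complex.conj_ofReal]
  have hcan : ∀ X : Matrix n n ℂ, star U * (U * X) = X := by
    intro X
    rw [← Matrix.mul_assoc, hUU, Matrix.one_mul]
  have hVH : Vᴴ = U * (diagonal g * (star U * Mᴴ)) := by
    rw [hV, conjTranspose_mul, conjTranspose_mul, conjTranspose_mul, diagonal_conjTranspose,
      hgg]
    simp only [star_eq_conjTranspose, conjTranspose_conjTranspose, Matrix.mul_assoc]
  have hkey : star U * Mᴴ * M = diagonal f * star U := by
    have h2 : star U * (Mᴴ * M) * U * star U = diagonal f * star U := by rw [hdiag]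
    calc star U * Mᴴ * M = star U * (Mᴴ * M) * (U * star U) := by
          rw [hUU', Matrix.mul_one, Matrix.mul_assoc]
      _ = diagonal f * star U := by rw [← Matrix.mul_assoc, h2]
  have hVM : Vᴴ * M = U * (diagonal g * diagonal f * star U) := by
    rw [hVH]
    simp only [Matrix.mul_assoc]
    rw [← Matrix.mul_assoc (star U) Mᴴ M, hkey]
  have hgf : ∀ j, g j * f j = ((Real.sqrt (lam j) : ℝ) : ℂ) := by
    intro j
    have hr : (Real.sqrt (lam j))⁻¹ * lam j = Real.sqrt (lam j) := by
      rcases (hH.eigenvalues_nonneg j).eq_or_lt with h | h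
      · have h' : lam j = 0 := by rw [hlam]; exact h.symm
        rw [h']; simp
      · have hs : Real.sqrt (lam j) ≠ 0 := ne_of_gt (Real.sqrt_pos.mpr h)
        rw [inv_mul_eq_iff_eq_mul₀ hs]
        exact (Real.mul_self_sqrt h.le).symm
    simp only [hg, hf, Function.comp_apply, ← Complex.ofReal_mul, hr]
  refine ⟨V, ?_, ?_⟩
  · have htr : (Vᴴ * M).trace = ∑ j, ((Real.sqrt (lam j) : ℝ) : ℂ) := by
      rw [hVM, Matrix.trace_mul_comm]
      simp only [Matrix.mul_assoc]
      rw [show star U * U = 1 from hUU, Matrix.mul_one, diagonal_mul_diagonal,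
        Matrix.trace_diagonal]
      exact Finset.sum_congr rfl fun j _ => hgf j
    rw [htr]
    unfold traceNorm
    rw [trace_unitary_conj]
  · intro c
    set t : n → ℝ := fun j => Real.sqrt (lam j) * (Real.sqrt (lam j))⁻¹ with ht
    have hdiagentry : (fun j => g j * f j * g j) = fun j => ((t j : ℝ) : ℂ) := by
      funext j
      rw [hgf j]
      simp only [hg, ht]
      push_cast
      ring
    have ht01 : ∀ j, 0 ≤ 1 - t j := by
      intro j
      rcases eq_or_ne (Real.sqrt (lam j)) 0 with h | h
      · simp [ht, h]
      · simp [ht, mul_inv_cancel₀ h]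
    have hVV : Vᴴ * V = U * (diagonal (fun j => g j * f j * g j) * star U) := by
      calc Vᴴ * V = Vᴴ * M * (U * (diagonal g * star U)) := by
            rw [hV]; simp only [Matrix.mul_assoc]
        _ = U * (diagonal g * diagonal f * star U) * (U * (diagonal g * star U)) := by
            rw [hVM]
        _ = U * (diagonal g * (diagonal f * (diagonal g * star U))) := by
            simp only [Matrix.mul_assoc]
            rw [hcan]
        _ = U * (diagonal (fun j => g j * f j * g j) * star U) := by
            rw [← Matrix.mul_assoc (diagonal f) (diagonal g) (star U),
              diagonal_mul_diagonal,
              ← Matrix.mul_assoc (diagonal g) (diagonal _) (star U),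
              diagonal_mul_diagonal]
            have hfun : (fun i => g i * (f i * g i)) = fun j => g j * f j * g j :=
              funext fun i => by ring
            rw [hfun]
    have hPSD1 : ((1 : Matrix n n ℂ) - Vᴴ * V).PosSemidef := by
      have h1 : (1 : Matrix n n ℂ) - Vᴴ * V
          = U * diagonal (fun j => ((1 - t j : ℝ) : ℂ)) * Uᴴ := by
        rw [hVV, hdiagentry, ← star_eq_conjTranspose]
        have hone : (1 : Matrix n n ℂ) = U * (diagonal (fun _ => (1:ℂ)) * star U) := by
          rw [diagonal_one, Matrix.one_mul, hUU']
        rw [Matrix.mul_assoc, hone, ← Matrix.mul_sub, ← Matrix.sub_mul, diagonal_sub]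
        congr 2
        funext j
        push_cast
        ring
      rw [h1]
      apply Matrix.PosSemidef.mul_mul_conjTranspose_same
      refine Matrix.posSemidef_diagonal_iff.mpr fun j => ?_
      rw [Complex.zero_le_real]
      exact ht01 j
    have h0 := hPSD1.dotProduct_mulVec_nonneg c
    rw [sub_mulVec, dotProduct_sub, Matrix.one_mulVec] at h0
    have h0' : (star c ⬝ᵥ (Vᴴ * V) *ᵥ c).re ≤ (star c ⬝ᵥ c).re := by
      have := (Complex.le_def.mp h0).1
      simp only [Complex.zero_re, Complex.sub_re] at this
      linarith
    have heq : star (V *ᵥ c) ⬝ᵥ (V *ᵥ c) = star c ⬝ᵥ (Vᴴ * V) *ᵥ c := by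
      rw [star_mulVec, dotProduct_mulVec, dotProduct_mulVec, vecMul_vecMul]
    rw [heq]
    exact h0'

private lemma dual_rank_one (V : Matrix m n ℂ)
    (hV : ∀ c : n → ℂ, (star (V *ᵥ c) ⬝ᵥ (V *ᵥ c)).re ≤ (star c ⬝ᵥ c).re)
    (a : m → ℂ) (b : n → ℂ) :
    ((Vᴴ * vecMulVec a b).trace).re ≤
      Real.sqrt (∑ i, ‖a i‖ ^ 2) * Real.sqrt (∑ j, ‖b j‖ ^ 2) := by
  set w : m → ℂ := V *ᵥ (star b) with hw
  have htr : (Vᴴ * vecMulVec a b).trace = (starRingEnd ℂ) (star a ⬝ᵥ w) := by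
    have lhs : (Vᴴ * vecMulVec a b).trace
        = ∑ q, ∑ p, (starRingEnd ℂ) (V p q) * (a p * b q) := by
      simp only [Matrix.trace, Matrix.diag, Matrix.mul_apply, conjTranspose_apply,
        vecMulVec_apply, Complex.star_def]
    have rhs : (starRingEnd ℂ) (star a ⬝ᵥ w)
        = ∑ p, ∑ q, a p * ((starRingEnd ℂ) (V p q) * b q) := by
      simp only [dotProduct, hw, mulVec, Pi.star_apply, Complex.star_def, _root_.map_sum,
        _root_.map_mul, Complex.conj_conj, Finset.mul_sum]
    rw [lhs, rhs, Finset.sum_comm]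
    exact Finset.sum_congr rfl fun p _ => Finset.sum_congr rfl fun q _ => by ring
  have hre : ((Vᴴ * vecMulVec a b).trace).re = (star a ⬝ᵥ w).re := by
    rw [htr, Complex.conj_re]
  rw [hre]
  have step1 : (star a ⬝ᵥ w).re ≤ ∑ p, ‖a p‖ * ‖w p‖ := by
    calc (star a ⬝ᵥ w).re ≤ ‖star a ⬝ᵥ w‖ := Complex.re_le_norm _
      _ ≤ ∑ p, ‖star a p * w p‖ := norm_sum_le _ _
      _ = ∑ p, ‖a p‖ * ‖w p‖ := by
          refine Finset.sum_congr rfl fun p _ => ?_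
          rw [norm_mul, Pi.star_apply, norm_star]
  have hcs : ∑ p, ‖a p‖ * ‖w p‖ ≤
      Real.sqrt (∑ p, ‖a p‖ ^ 2) * Real.sqrt (∑ p, ‖w p‖ ^ 2) := by
    have h := Finset.sum_mul_sq_le_sq_mul_sq Finset.univ (fun p => ‖a p‖) (fun p => ‖w p‖)
    have h0 : 0 ≤ ∑ p, ‖a p‖ * ‖w p‖ :=
      Finset.sum_nonneg fun p _ => mul_nonneg (norm_nonneg _) (norm_nonneg _)
    calc ∑ p, ‖a p‖ * ‖w p‖ = Real.sqrt ((∑ p, ‖a p‖ * ‖w p‖) ^ 2) :=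
          (Real.sqrt_sq h0).symm
      _ ≤ Real.sqrt ((∑ p, ‖a p‖ ^ 2) * ∑ p, ‖w p‖ ^ 2) := Real.sqrt_le_sqrt h
      _ = _ := Real.sqrt_mul (Finset.sum_nonneg fun p _ => sq_nonneg _) _
  have hw2 : ∑ p, ‖w p‖ ^ 2 ≤ ∑ j, ‖b j‖ ^ 2 := by
    have h := hV (star b)
    rw [re_star_dot, re_star_dot] at h
    simpa [norm_star] using h
  calc (star a ⬝ᵥ w).re ≤ ∑ p, ‖a p‖ * ‖w p‖ := step1
    _ ≤ Real.sqrt (∑ p, ‖a p‖ ^ 2) * Real.sqrt (∑ p, ‖w p‖ ^ 2) := hcs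
    _ ≤ Real.sqrt (∑ p, ‖a p‖ ^ 2) * Real.sqrt (∑ j, ‖b j‖ ^ 2) := by
        exact mul_le_mul_of_nonneg_left (Real.sqrt_le_sqrt hw2) (Real.sqrt_nonneg _)

end RealignAux

theorem realignment_criterion
    (NA NB : ℕ) (hNA : 2 ≤ NA) (hNB : 2 ≤ NB)
    {ι : Type} (s : Finset ι) (p : ι → ℝ)
    (ρA : ι → Matrix (Fin NA) (Fin NA) ℂ) (ρB : ι → Matrix (Fin NB) (Fin NB) ℂ)
    (hp : ∀ i ∈ s, 0 < p i) (hpsum : ∑ i ∈ s, p i = 1)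
    (hρA : ∀ i ∈ s, IsDensityMatrix (ρA i)) (hρB : ∀ i ∈ s, IsDensityMatrix (ρB i))
    (ρ : Matrix (Fin NA × Fin NB) (Fin NA × Fin NB) ℂ)
    (hρ : ρ = ∑ i ∈ s, (p i : ℂ) • (ρA i ⊗ₖ ρB i)) :
    traceNorm (realign ρ) ≤ 1 := by
  have hlin : realign ρ = ∑ i ∈ s, (p i : ℂ) •
      vecMulVec (fun q : Fin NA × Fin NA => ρA i q.1 q.2)
        (fun r : Fin NB × Fin NB => ρB i r.1 r.2) := by
    rw [hρ]
    ext q r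
    simp [realign, Matrix.sum_apply, Matrix.smul_apply, vecMulVec_apply,
      Matrix.kroneckerMap_apply, smul_eq_mul]
  obtain ⟨V, h1, h2⟩ := exists_dual (realign ρ)
  rw [h1, hlin, Matrix.mul_sum]
  rw [Matrix.trace_sum]
  simp only [Matrix.mul_smul, Matrix.trace_smul, smul_eq_mul, Complex.re_sum,
    Complex.mul_re, Complex.ofReal_re, Complex.ofReal_im, zero_mul, sub_zero]
  calc ∑ i ∈ s, p i * ((Vᴴ * vecMulVec (fun q : Fin NA × Fin NA => ρA i q.1 q.2)
        (fun r : Fin NB × Fin NB => ρB i r.1 r.2)).trace).re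
      ≤ ∑ i ∈ s, p i * 1 := by
        refine Finset.sum_le_sum fun i hi => ?_
        refine mul_le_mul_of_nonneg_left ?_ (hp i hi).le
        have hb := dual_rank_one V h2 (fun q : Fin NA × Fin NA => ρA i q.1 q.2)
          (fun r : Fin NB × Fin NB => ρB i r.1 r.2)
        have hAsum : (∑ q : Fin NA × Fin NA, ‖ρA i q.1 q.2‖ ^ 2) ≤ 1 := by
          rw [Fintype.sum_prod_type]
          exact density_sum_sq_le (hρA i hi)
        have hBsum : (∑ r : Fin NB × Fin NB, ‖ρB i r.1 r.2‖ ^ 2) ≤ 1 := by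
          rw [Fintype.sum_prod_type]
          exact density_sum_sq_le (hρB i hi)
        have hA1 : Real.sqrt (∑ q : Fin NA × Fin NA, ‖ρA i q.1 q.2‖ ^ 2) ≤ 1 := by
          rw [show (1:ℝ) = Real.sqrt 1 from (Real.sqrt_one).symm]
          exact Real.sqrt_le_sqrt hAsum
        have hB1 : Real.sqrt (∑ r : Fin NB × Fin NB, ‖ρB i r.1 r.2‖ ^ 2) ≤ 1 := by
          rw [show (1:ℝ) = Real.sqrt 1 from (Real.sqrt_one).symm]
          exact Real.sqrt_le_sqrt hBsum
        refine hb.trans ?_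
        calc Real.sqrt (∑ q : Fin NA × Fin NA, ‖ρA i q.1 q.2‖ ^ 2) *
              Real.sqrt (∑ r : Fin NB × Fin NB, ‖ρB i r.1 r.2‖ ^ 2)
            ≤ 1 * 1 := by
              exact mul_le_mul hA1 hB1 (Real.sqrt_nonneg _) zero_le_one
          _ = 1 := one_mul 1
    _ = 1 := by
        simp only [mul_one]
        exact hpsum
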